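/- (Alzer–Kwong) For every positive integer m and natural numbers ν, ℓ with 0 ≤ ν ≤ m and 0 ≤ ℓ ≤ m−1, one has ∑_{k=ℓ, k+m odd}^{m-1} C(m,k)·C(k+m,ν)·C(k+m−ν, ℓ+m−ν)·B_{k−ℓ} = (−1)^{ℓ+m+1}·((ℓ+m+1)/2)·C(m, ℓ+1)·C(ℓ+m, ν), where the sum runs only over those indices k in {ℓ,…,m−1} for which k+m is odd. -/

import Mathlib

open Finset

private lemma bern_odd_zero {n : ℕ} (h : Odd n) (h1 : 1 < n) : bernoulli n = 0 := by
  rw [bernoulli, bernoulli'_eq_zero_of_odd h h1, mul_zero]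

private lemma bern_reflect (j : ℕ) :
    (-1 : ℚ) ^ j * bernoulli j = bernoulli j + (if j = 1 then 1 else 0) := by
  match j with
  | 0 => simp
  | 1 => norm_num [bernoulli_one]
  | (n+2) =>
    rcases Nat.even_or_odd (n+2) with he | ho
    · rw [he.neg_one_pow]; simp
    · rw [bern_odd_zero ho (by omega)]; simp

private lemma alt_choose_sum {n : ℕ} (hn : n ≠ 0) :
    ∑ s ∈ range (n+1), (-1 : ℚ)^s * (n.choose s : ℚ) = 0 := by
  have h := Int.alternating_sum_range_choose (n := n)
  rw [if_neg hn] at h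
  exact_mod_cast congrArg (fun z : ℤ => (z : ℚ)) h

private lemma altV (m : ℕ) : ∀ d c : ℕ, c ≤ m →
    ∑ s ∈ range (m - c + 1), (-1 : ℚ)^s * ((c + d + s).choose s : ℚ) * (m.choose (c + s) : ℚ)
      = (-1)^(m - c) * (d.choose (m - c) : ℚ) := by
  intro d
  induction d with
  | zero =>
    intro c hc
    rcases eq_or_lt_of_le hc with rfl | hlt
    · simp
    · have h0 : ∑ s ∈ range (m - c + 1),
          (-1:ℚ)^s * ((c + 0 + s).choose s : ℚ) * (m.choose (c+s) : ℚ)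
          = ∑ s ∈ range (m - c + 1), (m.choose c : ℚ) * ((-1:ℚ)^s * ((m-c).choose s : ℚ)) := by
        refine Finset.sum_congr rfl fun s hs => ?_
        have hs' : s ≤ m - c := by
          have := mem_range.mp hs; omega
        have hcs : c + s ≤ m := by omega
        have h1 : (c + s).choose s = (c+s).choose c := by
          have h := Nat.choose_symm (n := c+s) (k := s) (by omega)
          rw [show c + s - s = c from by omega] at h
          exact h.symm
        have h2 : m.choose (c+s) * (c+s).choose c = m.choose c * (m - c).choose s := by
          have h := Nat.choose_mul (n := m) (k := c + s) (s := c) (by omega)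
          rwa [show c + s - c = s from by omega] at h
        have h2q : (m.choose (c+s) : ℚ) * ((c+s).choose c : ℚ) = (m.choose c : ℚ) * ((m-c).choose s : ℚ) := by
          exact_mod_cast congrArg (fun z : ℕ => (z : ℚ)) h2
        rw [show c + 0 + s = c + s from by omega, h1]
        calc (-1:ℚ)^s * ((c + s).choose c : ℚ) * (m.choose (c+s) : ℚ)
            = (-1:ℚ)^s * ((m.choose (c+s) : ℚ) * ((c+s).choose c : ℚ)) := by ring
          _ = (m.choose c : ℚ) * ((-1:ℚ)^s * ((m-c).choose s : ℚ)) := by rw [h2q]; ring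
      rw [h0, ← Finset.mul_sum, alt_choose_sum (by omega : m - c ≠ 0), mul_zero,
        Nat.choose_eq_zero_of_lt (by omega : 0 < m - c)]
      simp
  | succ d ih =>
    intro c hc
    rcases eq_or_lt_of_le hc with rfl | hlt
    · simp
    · have hc1 : c + 1 ≤ m := hlt
      have IH1 := ih c hc
      have IH2 := ih (c+1) hc1
      have hE : m - c + 1 = (m - (c+1) + 1) + 1 := by omega
      -- rewrite goal sum
      rw [hE, Finset.sum_range_succ'] at IH1 ⊢
      simp only [pow_zero, Nat.choose_zero_right, Nat.cast_one, one_mul, mul_one,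
        add_zero] at IH1 ⊢
      have hsplit : ∀ u ∈ range (m - (c+1) + 1),
          (-1:ℚ)^(u+1) * ((c + (d+1) + (u+1)).choose (u+1) : ℚ) * (m.choose (c+(u+1)) : ℚ)
          = (-1:ℚ)^(u+1) * ((c + d + (u+1)).choose (u+1) : ℚ) * (m.choose (c+(u+1)) : ℚ)
            - (-1:ℚ)^u * ((c + 1 + d + u).choose u : ℚ) * (m.choose (c + 1 + u) : ℚ) := by
        intro u hu
        have hp : (c + (d+1) + (u+1)).choose (u+1)
            = (c + d + (u+1)).choose (u+1) + (c + 1 + d + u).choose u := by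
          rw [show c + (d+1) + (u+1) = (c + d + u + 1) + 1 from by omega,
              Nat.choose_succ_succ]
          rw [show c + d + (u+1) = c + d + u + 1 from by omega,
              show c + 1 + d + u = c + d + u + 1 from by omega]
          simp only [Nat.succ_eq_add_one]
          omega
        rw [hp, show c + 1 + u = c + (u+1) from by omega]
        push_cast
        ring
      rw [Finset.sum_congr rfl hsplit, Finset.sum_sub_distrib]
      rw [sub_add_eq_add_sub, IH1, IH2]
      have h1 : m - c = (m - (c+1)) + 1 := by omega
      rw [h1, pow_succ, Nat.choose_succ_succ]
      push_cast
      ring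

private lemma Slem (m ℓ i : ℕ) (hl : ℓ ≤ m) (hi : i ≤ m - ℓ) :
    ∑ j ∈ range (m - ℓ + 1),
        (-1:ℚ)^j * (j.choose i : ℚ) * (m.choose (ℓ+j) : ℚ) * ((ℓ+m+j).choose j : ℚ)
      = (-1)^(m-ℓ) * (m.choose (ℓ+i) : ℚ) * ((ℓ+m+i).choose i : ℚ) := by
  have hrestrict : ∑ j ∈ range (m - ℓ + 1),
        (-1:ℚ)^j * (j.choose i : ℚ) * (m.choose (ℓ+j) : ℚ) * ((ℓ+m+j).choose j : ℚ)
      = ∑ j ∈ Ico i (m - ℓ + 1),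
        (-1:ℚ)^j * (j.choose i : ℚ) * (m.choose (ℓ+j) : ℚ) * ((ℓ+m+j).choose j : ℚ) := by
    refine (Finset.sum_subset ?_ ?_).symm
    · intro x hx
      simp only [mem_Ico, mem_range] at *
      omega
    · intro x hx hnx
      simp only [mem_Ico, mem_range] at hx hnx
      have : x < i := by omega
      rw [Nat.choose_eq_zero_of_lt this]
      push_cast
      ring
  rw [hrestrict, Finset.sum_Ico_eq_sum_range,
    show m - ℓ + 1 - i = m - (ℓ + i) + 1 from by omega]
  have hterm : ∀ s ∈ range (m - (ℓ + i) + 1),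
      (-1:ℚ)^(i+s) * ((i+s).choose i : ℚ) * (m.choose (ℓ+(i+s)) : ℚ) * ((ℓ+m+(i+s)).choose (i+s) : ℚ)
      = ((-1:ℚ)^i * ((ℓ+m+i).choose i : ℚ)) *
          ((-1:ℚ)^s * (((ℓ+i) + m + s).choose s : ℚ) * (m.choose ((ℓ+i)+s) : ℚ)) := by
    intro s hs
    have key : (ℓ+m+(i+s)).choose (i+s) * (i+s).choose s
        = (ℓ+m+(i+s)).choose s * ((ℓ+m+i)).choose i := by
      have h := Nat.choose_mul (n := ℓ+m+(i+s)) (k := i+s) (s := s)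
        (by omega)
      rw [show ℓ+m+(i+s) - s = ℓ+m+i from by omega,
        show i + s - s = i from by omega] at h
      exact h
    have hsymm : (i+s).choose i = (i+s).choose s := by
      have h := Nat.choose_symm (n := i+s) (k := s) (by omega)
      rw [show i + s - s = i from by omega] at h
      exact h
    have keyq : ((ℓ+m+(i+s)).choose (i+s) : ℚ) * ((i+s).choose s : ℚ)
        = ((ℓ+m+(i+s)).choose s : ℚ) * (((ℓ+m+i)).choose i : ℚ) := by
      exact_mod_cast congrArg (fun z : ℕ => (z : ℚ)) key
    rw [hsymm, show ℓ+i+m+s = ℓ+m+(i+s) from by omega,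
      show ℓ+(i+s) = ℓ+i+s from by omega, pow_add]
    calc (-1:ℚ)^i * (-1:ℚ)^s * ((i+s).choose s : ℚ) * (m.choose (ℓ+i+s) : ℚ) * ((ℓ+m+(i+s)).choose (i+s) : ℚ)
        = ((-1:ℚ)^i * (-1:ℚ)^s * (m.choose (ℓ+i+s) : ℚ)) *
            (((ℓ+m+(i+s)).choose (i+s) : ℚ) * ((i+s).choose s : ℚ)) := by ring
      _ = _ := by rw [keyq]; ring
  rw [Finset.sum_congr rfl hterm, ← Finset.mul_sum,
    altV m m (ℓ + i) (by omega)]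
  have hcs : m.choose (m - (ℓ+i)) = m.choose (ℓ+i) :=
    Nat.choose_symm (by omega : ℓ + i ≤ m)
  rw [hcs, show (-1:ℚ)^(m-(ℓ+i)) = (-1:ℚ)^(m-ℓ-i) from by rw [show m-(ℓ+i) = m-ℓ-i from by omega],
    show (-1:ℚ)^(m-ℓ) = (-1:ℚ)^i * (-1:ℚ)^(m-ℓ-i) from by
      rw [← pow_add, show i + (m-ℓ-i) = m-ℓ from by omega]]
  ring

private lemma core (m ℓ : ℕ) (hl : ℓ ≤ m) (hodd : Odd (m - ℓ)) :
    ∑ j ∈ range (m - ℓ + 1), (m.choose (ℓ+j) : ℚ) * ((ℓ+m+j).choose j : ℚ) * bernoulli j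
      = 0 := by
  set N := m - ℓ with hN
  have hN1 : 1 ≤ N := hodd.pos
  set U : ℚ := ∑ j ∈ range (N + 1), (m.choose (ℓ+j) : ℚ) * ((ℓ+m+j).choose j : ℚ) * bernoulli j
    with hU
  set X : ℚ := ∑ i ∈ range (N + 1), bernoulli i *
      (∑ j ∈ range (N + 1),
        (-1:ℚ)^j * (j.choose i : ℚ) * (m.choose (ℓ+j) : ℚ) * ((ℓ+m+j).choose j : ℚ)) with hX
  have E1 : X = -U := by
    rw [hX]
    have : ∀ i ∈ range (N+1), bernoulli i *
        (∑ j ∈ range (N + 1),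
          (-1:ℚ)^j * (j.choose i : ℚ) * (m.choose (ℓ+j) : ℚ) * ((ℓ+m+j).choose j : ℚ))
        = -(( m.choose (ℓ+i) : ℚ) * ((ℓ+m+i).choose i : ℚ) * bernoulli i) := by
      intro i hi
      rw [Slem m ℓ i hl (by simpa using Nat.lt_succ_iff.mp (mem_range.mp hi)),
        hodd.neg_one_pow]
      ring
    rw [Finset.sum_congr rfl this, ← Finset.sum_neg_distrib]
  have hInner : ∀ j ∈ range (N+1),
      ∑ i ∈ range (N + 1), (j.choose i : ℚ) * bernoulli i
        = bernoulli j + (if j = 1 then 1 else 0) := by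
    intro j hj
    have hj' : j ≤ N := by simpa using Nat.lt_succ_iff.mp (mem_range.mp hj)
    have hsub : ∑ i ∈ range (N + 1), (j.choose i : ℚ) * bernoulli i
        = ∑ i ∈ range (j + 1), (j.choose i : ℚ) * bernoulli i := by
      refine (Finset.sum_subset ?_ ?_).symm
      · intro x hx
        simp only [mem_range] at *
        omega
      · intro x hx hnx
        simp only [mem_range] at hx hnx
        rw [Nat.choose_eq_zero_of_lt (by omega)]
        simp
    rw [hsub, Finset.sum_range_succ, sum_bernoulli, Nat.choose_self]
    push_cast
    ring
  have E2 : X = U := by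
    rw [hX]
    simp only [Finset.mul_sum]
    rw [Finset.sum_comm]
    have step : ∀ j ∈ range (N+1),
        ∑ i ∈ range (N+1), bernoulli i *
          ((-1:ℚ)^j * (j.choose i : ℚ) * (m.choose (ℓ+j) : ℚ) * ((ℓ+m+j).choose j : ℚ))
        = (m.choose (ℓ+j) : ℚ) * ((ℓ+m+j).choose j : ℚ) * bernoulli j := by
      intro j hj
      have h1 : ∑ i ∈ range (N+1), bernoulli i *
          ((-1:ℚ)^j * (j.choose i : ℚ) * (m.choose (ℓ+j) : ℚ) * ((ℓ+m+j).choose j : ℚ))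
          = ((-1:ℚ)^j * (m.choose (ℓ+j) : ℚ) * ((ℓ+m+j).choose j : ℚ)) *
            ∑ i ∈ range (N+1), (j.choose i : ℚ) * bernoulli i := by
        rw [Finset.mul_sum]
        exact Finset.sum_congr rfl fun i _ => by ring
      rw [h1, hInner j hj]
      rcases eq_or_ne j 1 with rfl | hne
      · rw [if_pos rfl, bernoulli_one]
        push_cast
        ring
      · rw [if_neg hne, add_zero]
        have h := bern_reflect j
        rw [if_neg hne, add_zero] at h
        calc ((-1:ℚ)^j * (m.choose (ℓ+j) : ℚ) * ((ℓ+m+j).choose j : ℚ)) * bernoulli j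
            = (m.choose (ℓ+j) : ℚ) * ((ℓ+m+j).choose j : ℚ) * ((-1:ℚ)^j * bernoulli j) := by
              ring
          _ = _ := by rw [h]
    rw [Finset.sum_congr rfl step]
  have := E1.symm.trans E2
  linarith

theorem alzer_kwong_numbers_4 (m : ℕ) (hm : 0 < m) (ν ℓ : ℕ) (hν : ν ≤ m)
    (hℓ : ℓ + 1 ≤ m) :
    ∑ k ∈ (Finset.Ico ℓ m).filter (fun k => Odd (k + m)),
      (m.choose k : ℚ) * ((k + m).choose ν) * ((k + m - ν).choose (ℓ + m - ν)) *
        bernoulli (k - ℓ)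
    = (-1 : ℚ) ^ (ℓ + m + 1) * ((ℓ + m + 1) / 2) * (m.choose (ℓ + 1)) *
        ((ℓ + m).choose ν) := by
  have hred : ∀ k ∈ (Finset.Ico ℓ m).filter (fun k => Odd (k + m)),
      (m.choose k : ℚ) * ((k + m).choose ν) * ((k + m - ν).choose (ℓ + m - ν)) *
        bernoulli (k - ℓ)
      = ((m.choose k : ℚ) * ((k + m).choose (ℓ + m)) * bernoulli (k - ℓ)) *
          ((ℓ + m).choose ν) := by
    intro k hk
    have hk' := mem_Ico.mp (mem_filter.mp hk).1
    have htri : (k+m).choose (ℓ+m) * (ℓ+m).choose ν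
        = (k+m).choose ν * ((k+m) - ν).choose ((ℓ+m) - ν) :=
      Nat.choose_mul (by omega)
    have htriq : ((k+m).choose (ℓ+m) : ℚ) * ((ℓ+m).choose ν : ℚ)
        = ((k+m).choose ν : ℚ) * (((k+m) - ν).choose ((ℓ+m) - ν) : ℚ) := by
      exact_mod_cast congrArg (fun z : ℕ => (z : ℚ)) htri
    calc (m.choose k : ℚ) * ((k + m).choose ν) * ((k + m - ν).choose (ℓ + m - ν)) *
          bernoulli (k - ℓ)
        = (m.choose k : ℚ) * (((k + m).choose ν : ℚ) * ((k + m - ν).choose (ℓ + m - ν) : ℚ)) *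
          bernoulli (k - ℓ) := by ring
      _ = (m.choose k : ℚ) * (((k+m).choose (ℓ+m) : ℚ) * ((ℓ+m).choose ν : ℚ)) *
          bernoulli (k - ℓ) := by rw [htriq]
      _ = _ := by ring
  rw [Finset.sum_congr rfl hred, ← Finset.sum_mul]
  have key : ∑ k ∈ (Finset.Ico ℓ m).filter (fun k => Odd (k + m)),
      (m.choose k : ℚ) * ((k + m).choose (ℓ + m)) * bernoulli (k - ℓ)
      = (-1 : ℚ) ^ (ℓ + m + 1) * ((ℓ + m + 1) / 2) * (m.choose (ℓ + 1)) := by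
    rw [Finset.sum_filter, Finset.sum_Ico_eq_sum_range]
    have hsummand : ∀ j ∈ range (m - ℓ),
        (if Odd (ℓ + j + m) then
          (m.choose (ℓ+j) : ℚ) * (((ℓ+j) + m).choose (ℓ + m)) * bernoulli ((ℓ+j) - ℓ)
        else 0)
        = (if Odd (ℓ + j + m) then
            (m.choose (ℓ+j) : ℚ) * ((ℓ+m+j).choose j) * bernoulli j
          else 0) := by
      intro j hj
      have h1 : (ℓ+j) - ℓ = j := by omega
      have h2 : (ℓ+j) + m = ℓ+m+j := by omega
      have h3 : (ℓ+m+j).choose (ℓ+m) = (ℓ+m+j).choose j := by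
        have h := Nat.choose_symm (n := ℓ+m+j) (k := ℓ+m) (by omega)
        rw [show ℓ+m+j - (ℓ+m) = j from by omega] at h
        exact h.symm
      rw [h1, h2, h3]
    rw [Finset.sum_congr rfl hsummand]
    rcases Nat.even_or_odd (ℓ + m) with ⟨r, hr⟩ | ⟨r, hr⟩
    · -- ℓ + m even: single term j = 1
      have hmem : 1 ∈ range (m - ℓ) := by
        rw [mem_range]; omega
      rw [Finset.sum_eq_single_of_mem 1 hmem ?side]
      · rw [if_pos ⟨r, by omega⟩, bernoulli_one, Nat.choose_one_right,
          (Odd.neg_one_pow (n := ℓ+m+1) ⟨r, by omega⟩ : (-1:ℚ)^(ℓ+m+1) = -1)]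
        push_cast
        ring
      case side =>
        intro b hb hne
        by_cases hob : Odd (ℓ + b + m)
        · rw [if_pos hob]
          obtain ⟨w, hw⟩ := hob
          have hbodd : Odd b := ⟨w - r, by omega⟩
          rw [bern_odd_zero hbodd (by rcases hbodd with ⟨t, ht⟩; omega), mul_zero]
        · rw [if_neg hob]
    · -- ℓ + m odd
      have hoddN : Odd (m - ℓ) := ⟨r - ℓ, by omega⟩
      have hext : ∑ j ∈ range (m - ℓ),
          (if Odd (ℓ + j + m) then
            (m.choose (ℓ+j) : ℚ) * ((ℓ+m+j).choose j) * bernoulli j else 0)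
          = ∑ j ∈ range (m - ℓ + 1),
          (if Odd (ℓ + j + m) then
            (m.choose (ℓ+j) : ℚ) * ((ℓ+m+j).choose j) * bernoulli j else 0) := by
        rw [Finset.sum_range_succ, if_neg (by rintro ⟨w, hw⟩; omega), add_zero]
      rw [hext]
      have hsplitterm : ∀ j ∈ range (m - ℓ + 1),
          (if Odd (ℓ + j + m) then
            (m.choose (ℓ+j) : ℚ) * ((ℓ+m+j).choose j) * bernoulli j else 0)
          = (m.choose (ℓ+j) : ℚ) * ((ℓ+m+j).choose j) * bernoulli j -
            (if ¬ Odd (ℓ + j + m) then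
              (m.choose (ℓ+j) : ℚ) * ((ℓ+m+j).choose j) * bernoulli j else 0) := by
        intro j hj
        by_cases hob : Odd (ℓ + j + m) <;> simp [hob]
      rw [Finset.sum_congr rfl hsplitterm, Finset.sum_sub_distrib,
        core m ℓ (by omega) hoddN, zero_sub]
      have hmem : 1 ∈ range (m - ℓ + 1) := by rw [mem_range]; omega
      rw [Finset.sum_eq_single_of_mem 1 hmem ?side2]
      · rw [if_pos (by rintro ⟨w, hw⟩; omega), bernoulli_one, Nat.choose_one_right,
          (Even.neg_one_pow (n := ℓ+m+1) ⟨r+1, by omega⟩ : (-1:ℚ)^(ℓ+m+1) = 1)]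
        push_cast
        ring
      case side2 =>
        intro b hb hne
        by_cases hob : Odd (ℓ + b + m)
        · rw [if_neg (by simpa using hob)]
        · rw [if_pos hob]
          rcases Nat.even_or_odd (ℓ + b + m) with ⟨w, hw⟩ | hcontra
          · have hbodd : Odd b := ⟨w - r - 1, by omega⟩
            rw [bern_odd_zero hbodd (by rcases hbodd with ⟨t, ht⟩; omega), mul_zero]
          · exact absurd hcontra hob
  rw [key]
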